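/- Let p be a prime, k ≥ 2 an integer, and f ∈ ℤ[x] not identically zero modulo p. If ζ₀ ∈ {0,…,p−1} is a root of the mod-p reduction f̃ with s := s(f,ζ₀) ∈ {2,…,k−1}, then the number of ζ ∈ ℤ/(p^k) with ζ ≡ ζ₀ (mod p) and f(ζ) ≡ 0 (mod p^k) equals p^{s−1} · N_{p,k−s}( f_{1,ζ₀} ). -/

import Mathlib

open Polynomial

/-- `N_{p,k}(f)`: the number of residues `ζ ∈ ℤ/(p^k)` with `f(ζ) ≡ 0 (mod p^k)`. -/
def Npk (p k : ℕ) (f : Polynomial ℤ) : ℕ :=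
  ((Finset.range (p ^ k)).filter fun ζ : ℕ => (p : ℤ) ^ k ∣ f.eval (ζ : ℤ)).card

/-- `s(f,ζ₀) = min_{i ≥ 0} (i + ord_p(f⁽ⁱ⁾(ζ₀)/i!))`, where `f⁽ⁱ⁾(ζ₀)/i!` is the
coefficient of `x^i` in `f(ζ₀+x)`; the minimum ranges over `i` with nonzero coefficient. -/
noncomputable def sVal (p : ℕ) (f : Polynomial ℤ) (ζ₀ : ℤ) : ℕ :=
  sInf {n : ℕ | ∃ i : ℕ, (f.comp (X + C ζ₀)).coeff i ≠ 0 ∧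
    n = i + padicValInt p ((f.comp (X + C ζ₀)).coeff i)}

/-- Coefficientwise exact division of a polynomial by a constant. -/
noncomputable def divC (c : ℤ) (f : Polynomial ℤ) : Polynomial ℤ :=
  f.sum fun n a => C (a / c) * X ^ n

/-- `f_{1,ζ₀}(x) := f(ζ₀ + p·x) / p^{s(f,ζ₀)}`. -/
noncomputable def fOne (p : ℕ) (f : Polynomial ℤ) (ζ₀ : ℤ) : Polynomial ℤ :=
  divC ((p : ℤ) ^ sVal p f ζ₀) (f.comp (C (p : ℤ) * X + C ζ₀))

lemma coeff_comp_C_mul_X (f : Polynomial ℤ) (c : ℤ) (n : ℕ) :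
    (f.comp (C c * X)).coeff n = c ^ n * f.coeff n := by
  induction f using Polynomial.induction_on' with
  | add p q hp hq => simp only [add_comp, coeff_add, hp, hq, mul_add]
  | monomial m a =>
      rw [← C_mul_X_pow_eq_monomial]
      simp only [mul_comp, C_comp, pow_comp, X_comp, mul_pow, ← C_pow, coeff_C_mul, coeff_X_pow]
      rcases eq_or_ne n m with rfl | h
      · simp [mul_comm]
      · simp [h]

lemma mul_eval_divC (c : ℤ) (f : Polynomial ℤ) (h : ∀ n, c ∣ f.coeff n) (t : ℤ) :
    c * (divC c f).eval t = f.eval t := by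
  unfold divC
  rw [Polynomial.sum, eval_finset_sum, Finset.mul_sum]
  rw [eval_eq_sum, Polynomial.sum]
  refine Finset.sum_congr rfl fun n _ => ?_
  simp only [eval_mul, eval_C, eval_pow, eval_X]
  rw [← mul_assoc, Int.mul_ediv_cancel' (h n)]

lemma sVal_dvd_coeff (p : ℕ) (hp : p.Prime) (f : Polynomial ℤ) (ζ₀ : ℤ) (n : ℕ) :
    (p : ℤ) ^ sVal p f ζ₀ ∣ (f.comp (C (p : ℤ) * X + C ζ₀)).coeff n := by
  have hcomp : f.comp (C (p : ℤ) * X + C ζ₀) = (f.comp (X + C ζ₀)).comp (C (p : ℤ) * X) := by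
    rw [comp_assoc]
    simp [add_comp]
  rw [hcomp, coeff_comp_C_mul_X]
  set g := f.comp (X + C ζ₀) with hg
  rcases eq_or_ne (g.coeff n) 0 with h0 | h0
  · simp [h0]
  · have hmem : n + padicValInt p (g.coeff n) ∈ {m : ℕ | ∃ i : ℕ, g.coeff i ≠ 0 ∧
        m = i + padicValInt p (g.coeff i)} := ⟨n, h0, rfl⟩
    have hle : sVal p f ζ₀ ≤ n + padicValInt p (g.coeff n) := Nat.sInf_le hmem
    calc (p : ℤ) ^ sVal p f ζ₀ ∣ (p : ℤ) ^ (n + padicValInt p (g.coeff n)) :=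
          pow_dvd_pow _ hle
      _ ∣ (p : ℤ) ^ n * g.coeff n := by
          rw [pow_add]
          exact mul_dvd_mul_left _ (padicValInt_dvd (p := p) _)

lemma eval_fOne (p : ℕ) (hp : p.Prime) (f : Polynomial ℤ) (ζ₀ t : ℤ) :
    (p : ℤ) ^ sVal p f ζ₀ * (fOne p f ζ₀).eval t = f.eval (ζ₀ + p * t) := by
  rw [fOne, mul_eval_divC _ _ (sVal_dvd_coeff p hp f ζ₀), eval_comp]
  simp [add_comm]

lemma dvd_eval_congr (N : ℤ) (g : Polynomial ℤ) {a b : ℤ} (h : N ∣ a - b) :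
    (N ∣ g.eval a ↔ N ∣ g.eval b) := by
  have h2 : N ∣ g.eval a - g.eval b := h.trans (sub_dvd_eval_sub a b g)
  constructor
  · intro ha
    have := ha.sub h2
    simpa using this
  · intro hb
    have := h2.add hb
    simpa using this

lemma period_count (N M : ℕ) (hN : 0 < N) (g : Polynomial ℤ) :
    ((Finset.range (N * M)).filter fun t : ℕ => (N : ℤ) ∣ g.eval (t : ℤ)).card
      = ((Finset.range N).filter fun t : ℕ => (N : ℤ) ∣ g.eval (t : ℤ)).card * M := by
  have key : ∀ t : ℕ, (N : ℤ) ∣ g.eval (t : ℤ) ↔ (N : ℤ) ∣ g.eval ((t % N : ℕ) : ℤ) := by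
    intro t
    refine dvd_eval_congr _ _ ?_
    refine ⟨(t / N : ℕ), ?_⟩
    have h : (t : ℤ) = (N : ℤ) * ((t / N : ℕ) : ℤ) + ((t % N : ℕ) : ℤ) := by
      exact_mod_cast (Nat.div_add_mod t N).symm
    rw [h]; ring
  rw [show ((Finset.range N).filter fun t : ℕ => (N : ℤ) ∣ g.eval (t : ℤ)).card * M
      = (((Finset.range N).filter fun t : ℕ => (N : ℤ) ∣ g.eval (t : ℤ)) ×ˢ
        Finset.range M).card by rw [Finset.card_product, Finset.card_range]]
  refine Finset.card_bij' (fun t _ => (t % N, t / N)) (fun rq _ => rq.1 + N * rq.2) ?_ ?_ ?_ ?_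
  · intro t ht
    simp only [Finset.mem_filter, Finset.mem_range] at ht
    simp only [Finset.mem_product, Finset.mem_filter, Finset.mem_range]
    refine ⟨⟨Nat.mod_lt _ hN, (key t).mp ht.2⟩, ?_⟩
    exact Nat.div_lt_of_lt_mul ht.1
  · intro rq hrq
    simp only [Finset.mem_product, Finset.mem_filter, Finset.mem_range] at hrq
    simp only [Finset.mem_filter, Finset.mem_range]
    obtain ⟨⟨hr, hdvd⟩, hq⟩ := hrq
    constructor
    · calc rq.1 + N * rq.2 < N + N * rq.2 := by omega
        _ = N * (rq.2 + 1) := by ring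
        _ ≤ N * M := Nat.mul_le_mul_left _ (by omega)
    · rw [show ((rq.1 + N * rq.2 : ℕ) : ℤ) = (rq.1 : ℤ) + N * rq.2 by push_cast; ring]
      exact (dvd_eval_congr _ _ ⟨(rq.2 : ℤ), by ring⟩).mpr hdvd
  · intro t _; exact Nat.mod_add_div t N
  · intro rq hrq
    simp only [Finset.mem_product, Finset.mem_filter, Finset.mem_range] at hrq
    obtain ⟨⟨hr, _⟩, _⟩ := hrq
    have h1 : (rq.1 + N * rq.2) % N = rq.1 := by
      rw [Nat.add_mul_mod_self_left, Nat.mod_eq_of_lt hr]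
    have h2 : (rq.1 + N * rq.2) / N = rq.2 := by
      rw [Nat.add_mul_div_left _ _ hN, Nat.div_eq_of_lt hr, zero_add]
    simp [h1, h2]

/-- If `ζ₀` is a root of the mod-`p` reduction of `f` with `2 ≤ s(f,ζ₀) ≤ k-1`, then the
number of lifts of `ζ₀` to roots of `f` in `ℤ/(p^k)` is `p^{s-1}·N_{p,k-s}(f_{1,ζ₀})`. -/
theorem lifts_card_of_sVal_mid (p : ℕ) (hp : p.Prime) (k : ℕ) (hk : 2 ≤ k)
    (f : Polynomial ℤ) (hf : f.map (Int.castRingHom (ZMod p)) ≠ 0)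
    (ζ₀ : ℤ) (hζ₀0 : 0 ≤ ζ₀) (hζ₀1 : ζ₀ < (p : ℤ))
    (hroot : (p : ℤ) ∣ f.eval ζ₀)
    (hs2 : 2 ≤ sVal p f ζ₀) (hsk : sVal p f ζ₀ ≤ k - 1) :
    ((Finset.range (p ^ k)).filter fun ζ : ℕ =>
        (p : ℤ) ∣ ((ζ : ℤ) - ζ₀) ∧ (p : ℤ) ^ k ∣ f.eval (ζ : ℤ)).card
      = p ^ (sVal p f ζ₀ - 1) * Npk p (k - sVal p f ζ₀) (fOne p f ζ₀) := by
  set s := sVal p f ζ₀ with hsdef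
  set m := k - s with hmdef
  have hppos : 0 < p := hp.pos
  have hsk' : s < k := by omega
  have hm1 : 1 ≤ m := by omega
  set z₀ := ζ₀.toNat with hz₀def
  have hz : (z₀ : ℤ) = ζ₀ := Int.toNat_of_nonneg hζ₀0
  have hz₀p : z₀ < p := by
    have : (z₀ : ℤ) < (p : ℤ) := by rw [hz]; exact hζ₀1
    exact_mod_cast this
  have hpk : p ^ k = p * p ^ (k - 1) := by
    rw [← pow_succ']
    congr 1
    omega
  -- characterize the congruence condition
  have hmodchar : ∀ ζ : ℕ, ((p : ℤ) ∣ ((ζ : ℤ) - ζ₀)) ↔ ζ % p = z₀ := by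
    intro ζ
    constructor
    · intro h
      have h1 : ((ζ : ℤ) - ζ₀) % p = 0 := Int.emod_eq_zero_of_dvd h
      have h2 : (ζ : ℤ) % p = ζ₀ % p := Int.emod_eq_emod_iff_emod_sub_eq_zero.mpr h1
      have h3 : ζ₀ % p = ζ₀ := Int.emod_eq_of_lt hζ₀0 hζ₀1
      have h4 : ((ζ % p : ℕ) : ℤ) = (z₀ : ℤ) := by
        rw [hz]
        push_cast
        rw [h2, h3]
      exact_mod_cast h4
    · intro h
      refine ⟨((ζ / p : ℕ) : ℤ), ?_⟩
      have hζeq : (ζ : ℤ) = (p : ℤ) * ((ζ / p : ℕ) : ℤ) + (z₀ : ℤ) := by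
        exact_mod_cast (h ▸ (Nat.div_add_mod ζ p).symm : (ζ : ℕ) = p * (ζ / p) + z₀)
      rw [hζeq, hz]
      ring
  -- step 1: bijection with t ∈ range (p^(k-1))
  have step1 : ((Finset.range (p ^ k)).filter fun ζ : ℕ =>
        (p : ℤ) ∣ ((ζ : ℤ) - ζ₀) ∧ (p : ℤ) ^ k ∣ f.eval (ζ : ℤ)).card
      = ((Finset.range (p ^ (k - 1))).filter fun t : ℕ =>
        (p : ℤ) ^ k ∣ f.eval (ζ₀ + p * t)).card := by
    refine Finset.card_bij' (fun ζ _ => ζ / p) (fun t _ => z₀ + p * t) ?_ ?_ ?_ ?_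
    · intro ζ hζ
      simp only [Finset.mem_filter, Finset.mem_range] at hζ ⊢
      obtain ⟨hlt, hdvdp, hdvdk⟩ := hζ
      have hmod : ζ % p = z₀ := (hmodchar ζ).mp hdvdp
      constructor
      · exact Nat.div_lt_of_lt_mul (by rw [← hpk]; exact hlt)
      · have heq : ζ₀ + (p : ℤ) * ((ζ / p : ℕ) : ℤ) = (ζ : ℤ) := by
          have : (ζ : ℕ) = p * (ζ / p) + z₀ := hmod ▸ (Nat.div_add_mod ζ p).symm
          have h2 : (ζ : ℤ) = (p : ℤ) * ((ζ / p : ℕ) : ℤ) + (z₀ : ℤ) := by exact_mod_cast this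
          rw [h2, hz]; ring
        rw [heq]
        exact hdvdk
    · intro t ht
      simp only [Finset.mem_filter, Finset.mem_range] at ht ⊢
      obtain ⟨hlt, hdvd⟩ := ht
      refine ⟨?_, ?_, ?_⟩
      · calc z₀ + p * t < p + p * t := by omega
          _ = p * (t + 1) := by ring
          _ ≤ p * p ^ (k - 1) := Nat.mul_le_mul_left _ (by omega)
          _ = p ^ k := hpk.symm
      · refine ⟨(t : ℤ), ?_⟩
        push_cast
        rw [hz]
        ring
      · have : ((z₀ + p * t : ℕ) : ℤ) = ζ₀ + (p : ℤ) * (t : ℤ) := by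
          push_cast
          rw [hz]
        rw [this]
        exact hdvd
    · intro ζ hζ
      simp only [Finset.mem_filter, Finset.mem_range] at hζ
      have hmod : ζ % p = z₀ := (hmodchar ζ).mp hζ.2.1
      show z₀ + p * (ζ / p) = ζ
      rw [← hmod]
      exact Nat.mod_add_div ζ p
    · intro t _
      show (z₀ + p * t) / p = t
      rw [Nat.add_mul_div_left _ _ hppos, Nat.div_eq_of_lt hz₀p, zero_add]
  -- step 2: rewrite the divisibility condition using fOne
  have step2 : ∀ t : ℕ, ((p : ℤ) ^ k ∣ f.eval (ζ₀ + p * t))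
      ↔ ((p : ℤ) ^ m ∣ (fOne p f ζ₀).eval (t : ℤ)) := by
    intro t
    rw [← eval_fOne p hp f ζ₀ (t : ℤ), ← hsdef]
    have hk' : (p : ℤ) ^ k = (p : ℤ) ^ s * (p : ℤ) ^ m := by
      rw [← pow_add]
      congr 1
      omega
    rw [hk']
    exact mul_dvd_mul_iff_left (pow_ne_zero _ (by exact_mod_cast hp.ne_zero))
  rw [step1, Finset.filter_congr (fun t _ => step2 t)]
  -- step 3: periodicity
  have hsplit : p ^ (k - 1) = p ^ m * p ^ (s - 1) := by
    rw [← pow_add]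
    congr 1
    omega
  have hcast : ((p : ℤ)) ^ m = ((p ^ m : ℕ) : ℤ) := by push_cast; ring
  rw [hsplit, hcast, period_count _ _ (pow_pos hppos m) (fOne p f ζ₀), Npk, hcast]
  exact mul_comm _ _
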